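/- The minimal elements of the poset P_𝓛 are exactly the elements a_{i,u_i+1} for those i ∈ [n] with ε_i > 1 (i.e., i = n or u_{i+1} − u_i > 1), and the maximal elements of P_𝓛 are exactly the elements a_{i,v_i} for those i ∈ [n] with θ_{i−1} > 1 (i.e., i = 1 or v_i − v_{i−1} > 1). -/

import Mathlib

namespace LadderPaper

/-- The tuple `a_{i,j}`: entry `t` is `u t` for `t < i` and `max (j + (t - i)) (u t)` for
`t ≥ i` (indices `t ∈ [1,n]`; entries outside `[1,n]` are set to `0`). -/
def atuple (u : ℕ → ℤ) (n i : ℕ) (j : ℤ) : ℕ → ℤ := fun t =>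
  if 1 ≤ t ∧ t ≤ n then
    (if t < i then u t else max (j + ((t : ℤ) - (i : ℤ))) (u t))
  else 0

/-- The tuple `b_{i,j}`: like `a_{i,j}` but with `i`-th entry `j - 1`. -/
def btuple (u : ℕ → ℤ) (n i : ℕ) (j : ℤ) : ℕ → ℤ := fun t =>
  if 1 ≤ t ∧ t ≤ n then
    (if t < i then u t
     else if t = i then j - 1
     else max (j + ((t : ℤ) - (i : ℤ))) (u t))
  else 0

/-- The tuple `(u_1, …, u_n)`. -/
def utuple (u : ℕ → ℤ) (n : ℕ) : ℕ → ℤ := fun t =>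
  if 1 ≤ t ∧ t ≤ n then u t else 0

/-- The lattice `𝓛` of tuples `c` with `u t ≤ c t ≤ v t` for `t ∈ [1,n]`, strictly
increasing entries, and (normalization) `c t = 0` outside `[1,n]`.  It carries the
componentwise (induced product) order. -/
def ladderL (n : ℕ) (u v : ℕ → ℤ) : Set (ℕ → ℤ) :=
  {c | (∀ t, 1 ≤ t → t ≤ n → u t ≤ c t ∧ c t ≤ v t) ∧
       (∀ t, 1 ≤ t → t + 1 ≤ n → c t < c (t + 1)) ∧
       (∀ t, t = 0 ∨ n < t → c t = 0)}

/-- The set `P_𝓛 = { a_{i,j} : i ∈ [n], j ∈ [u_i + 1, v_i] }`. -/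
def PL (n : ℕ) (u v : ℕ → ℤ) : Set (ℕ → ℤ) :=
  {x | ∃ i : ℕ, ∃ j : ℤ, 1 ≤ i ∧ i ≤ n ∧ u i + 1 ≤ j ∧ j ≤ v i ∧ x = atuple u n i j}

/-- The product poset `𝓛 × [r]`. -/
def ladderLr (n : ℕ) (u v : ℕ → ℤ) (r : ℤ) : Set ((ℕ → ℤ) × ℤ) :=
  {p | p.1 ∈ ladderL n u v ∧ 1 ≤ p.2 ∧ p.2 ≤ r}

/-- The set `P_{𝓛×[r]} = { (a_{i,j}, 1) } ∪ { ((u_1,…,u_n), k) : k ∈ [2,r] }`. -/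
def PLr (n : ℕ) (u v : ℕ → ℤ) (r : ℤ) : Set ((ℕ → ℤ) × ℤ) :=
  {p | (p.1 ∈ PL n u v ∧ p.2 = 1) ∨ (p.1 = utuple u n ∧ 2 ≤ p.2 ∧ p.2 ≤ r)}

/-- `ε_i > 1`, with the convention `ε_n > 1` (i.e. `i = n` or `u_{i+1} - u_i > 1`). -/
def epsGt1 (u : ℕ → ℤ) (n i : ℕ) : Prop := i = n ∨ 1 < u (i + 1) - u i

/-- `θ_{i-1} > 1`, with the convention `θ_0 > 1` (i.e. `i = 1` or `v_i - v_{i-1} > 1`). -/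
def thetaGt1 (v : ℕ → ℤ) (i : ℕ) : Prop := i = 1 ∨ 1 < v i - v (i - 1)

/-- Membership in `C = { i ∈ [n-1] : v_i < u_{i+1} } ∪ { n }`. -/
def inC (n : ℕ) (u v : ℕ → ℤ) (i : ℕ) : Prop :=
  (1 ≤ i ∧ i + 1 ≤ n ∧ v i < u (i + 1)) ∨ i = n

/-- The set `C = { i ∈ [n-1] : v_i < u_{i+1} } ∪ { n }`. -/
def Cset (n : ℕ) (u v : ℕ → ℤ) : Set ℕ :=
  {i | 1 ≤ i ∧ i + 1 ≤ n ∧ v i < u (i + 1)} ∪ {n}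

/-- `[p,q]` is one of the blocks `[p_s, q_s]` determined by `C`: `q ∈ C`,
no element of `C` lies in `[p, q-1]`, and either `p = 1` or `p - 1 ∈ C`. -/
def IsBlock (n : ℕ) (u v : ℕ → ℤ) (p q : ℕ) : Prop :=
  1 ≤ p ∧ p ≤ q ∧ q ≤ n ∧ inC n u v q ∧
    (∀ j, p ≤ j → j < q → ¬ inC n u v j) ∧ (p = 1 ∨ inC n u v (p - 1))

/-- `i0 = min { i ∈ [p,q] : ε_i > 1 }` (with the convention `ε_n > 1`). -/
def IsBlockMin (n : ℕ) (u : ℕ → ℤ) (p q i0 : ℕ) : Prop :=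
  p ≤ i0 ∧ i0 ≤ q ∧ epsGt1 u n i0 ∧ ∀ j, p ≤ j → j < i0 → ¬ epsGt1 u n j

/-- The comparability graph of a poset: two distinct elements are adjacent
iff they are comparable. -/
def compGraph (α : Type*) [Preorder α] : SimpleGraph α where
  Adj x y := x ≠ y ∧ (x ≤ y ∨ y ≤ x)
  symm := ⟨fun x y h => ⟨Ne.symm h.1, Or.symm h.2⟩⟩
  loopless := ⟨fun x h => h.1 rfl⟩

/-- A poset is pure if all of its maximal chains have the same cardinality
(equivalently, the same length). -/
def IsPure (α : Type*) [Preorder α] : Prop :=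
  ∀ A B : Set α, IsMaxChain (· ≤ ·) A → IsMaxChain (· ≤ ·) B → A.ncard = B.ncard

private lemma gap (w : ℕ → ℤ) (n : ℕ)
    (hmono : ∀ i, 1 ≤ i → i + 1 ≤ n → w i < w (i + 1)) :
    ∀ i t, 1 ≤ i → i ≤ t → t ≤ n → w i + ((t : ℤ) - (i : ℤ)) ≤ w t := by
  intro i t hi hit
  induction t, hit using Nat.le_induction with
  | base => intro _; simp
  | succ t ht ih =>
    intro htn
    have h1 : w t < w (t + 1) := hmono t (le_trans hi ht) htn
    have h2 := ih (by omega)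
    push_cast at h2 ⊢
    omega

private lemma atuple_lt {u : ℕ → ℤ} {n i t : ℕ} {j : ℤ} (h1 : 1 ≤ t) (h2 : t ≤ n)
    (h : t < i) : atuple u n i j t = u t := by
  unfold atuple; rw [if_pos ⟨h1, h2⟩, if_pos h]

private lemma atuple_ge {u : ℕ → ℤ} {n i t : ℕ} {j : ℤ} (h1 : 1 ≤ t) (h2 : t ≤ n)
    (h : i ≤ t) : atuple u n i j t = max (j + ((t : ℤ) - (i : ℤ))) (u t) := by
  unfold atuple; rw [if_pos ⟨h1, h2⟩, if_neg (by omega)]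

private lemma atuple_self {u : ℕ → ℤ} {n i : ℕ} {j : ℤ} (h1 : 1 ≤ i) (h2 : i ≤ n) :
    atuple u n i j i = max j (u i) := by
  rw [atuple_ge h1 h2 le_rfl]; simp

private lemma atuple_out {u : ℕ → ℤ} {n i t : ℕ} {j : ℤ} (h : ¬(1 ≤ t ∧ t ≤ n)) :
    atuple u n i j t = 0 := if_neg h

private lemma atuple_ge_u {u : ℕ → ℤ} {n i t : ℕ} {j : ℤ} (h1 : 1 ≤ t) (h2 : t ≤ n) :
    u t ≤ atuple u n i j t := by
  rcases lt_or_ge t i with h | h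
  · rw [atuple_lt h1 h2 h]
  · rw [atuple_ge h1 h2 h]; exact le_max_right _ _

private lemma atuple_le_v {n : ℕ} {u v : ℕ → ℤ}
    (hvmono : ∀ i, 1 ≤ i → i + 1 ≤ n → v i < v (i + 1))
    (huv : ∀ i, 1 ≤ i → i ≤ n → u i < v i)
    {i t : ℕ} {j : ℤ} (hi1 : 1 ≤ i) (hj : j ≤ v i)
    (ht1 : 1 ≤ t) (htn : t ≤ n) : atuple u n i j t ≤ v t := by
  rcases lt_or_ge t i with h | h
  · rw [atuple_lt ht1 htn h]; exact (huv t ht1 htn).le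
  · rw [atuple_ge ht1 htn h]
    have := gap v n hvmono i t hi1 h htn
    exact max_le (by omega) (huv t ht1 htn).le


private lemma pi_le {f g : ℕ → ℤ} (h : ∀ t, f t ≤ g t) : f ≤ g := h

private lemma le_pi {f g : ℕ → ℤ} (h : f ≤ g) : ∀ t, f t ≤ g t := h

theorem stmt8
    (n m : ℕ) (u v : ℕ → ℤ)
    (hn : 1 ≤ n) (hnm : n < m)
    (hu1 : u 1 = 1)
    (humono : ∀ i, 1 ≤ i → i + 1 ≤ n → u i < u (i + 1))
    (hum : u n < (m : ℤ))
    (hv1 : 1 < v 1)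
    (hvmono : ∀ i, 1 ≤ i → i + 1 ≤ n → v i < v (i + 1))
    (hvn : v n = (m : ℤ))
    (huv : ∀ i, 1 ≤ i → i ≤ n → u i < v i)
    (hstep : ∀ i, 1 ≤ i → i + 1 ≤ n → u (i + 1) ≤ v i + 1) :
    (∀ x : ↥(PL n u v),
      IsMin x ↔ ∃ i : ℕ, 1 ≤ i ∧ i ≤ n ∧ epsGt1 u n i ∧
        (x : ℕ → ℤ) = atuple u n i (u i + 1)) ∧
    (∀ x : ↥(PL n u v),
      IsMax x ↔ ∃ i : ℕ, 1 ≤ i ∧ i ≤ n ∧ thetaGt1 v i ∧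
        (x : ℕ → ℤ) = atuple u n i (v i)) := by
  constructor
  · -- === minimal elements ===
    rintro ⟨x, hxPL⟩
    constructor
    · intro hmin
      obtain ⟨i, j, hi1, hin, hj1, hj2, hx⟩ := id hxPL
      by_cases hj : u i + 1 < j
      · -- a_{i,j-1} < x : contradiction with minimality
        exfalso
        have hc1 : u i + 1 ≤ j - 1 := by omega
        have hc2 : j - 1 ≤ v i := by omega
        have hyPL : atuple u n i (j - 1) ∈ PL n u v := ⟨i, j - 1, hi1, hin, hc1, hc2, rfl⟩
        have h1 : (⟨atuple u n i (j - 1), hyPL⟩ : ↥(PL n u v)) ≤ ⟨x, hxPL⟩ := by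
          show atuple u n i (j - 1) ≤ x
          rw [hx]; refine pi_le fun t => ?_
          by_cases ht : 1 ≤ t ∧ t ≤ n
          · rcases lt_or_ge t i with h | h
            · rw [atuple_lt ht.1 ht.2 h, atuple_lt ht.1 ht.2 h]
            · rw [atuple_ge ht.1 ht.2 h, atuple_ge ht.1 ht.2 h]
              refine max_le_max ?_ le_rfl
              omega
          · rw [atuple_out ht, atuple_out ht]
        have h2 : x ≤ atuple u n i (j - 1) := hmin h1
        have h3 := le_pi h2 i
        have e1 : atuple u n i j i = j := by
          rw [atuple_self hi1 hin]; exact max_eq_left (by omega)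
        have e2 : atuple u n i (j - 1) i = j - 1 := by
          rw [atuple_self hi1 hin]; exact max_eq_left (by omega)
        rw [hx, e1, e2] at h3
        omega
      · have hjeq : j = u i + 1 := by omega
        by_cases heps : epsGt1 u n i
        · exact ⟨i, hi1, hin, heps, by show x = atuple u n i (u i + 1); rw [hx, hjeq]⟩
        · -- ε_i ≤ 1: a_{i+1, u_{i+1}+1} < x : contradiction
          exfalso
          rw [epsGt1] at heps; push_neg at heps
          obtain ⟨hine, hle⟩ := heps
          have hi1n : i + 1 ≤ n := by omega
          have hu' : u (i + 1) = u i + 1 := by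
            have := humono i hi1 hi1n; omega
          have hc1 : u (i + 1) + 1 ≤ v (i + 1) := by
            have := huv (i + 1) (by omega) hi1n; omega
          have hyPL : atuple u n (i + 1) (u (i + 1) + 1) ∈ PL n u v :=
            ⟨i + 1, u (i + 1) + 1, by omega, hi1n, le_rfl, hc1, rfl⟩
          have h1 : (⟨atuple u n (i + 1) (u (i + 1) + 1), hyPL⟩ : ↥(PL n u v)) ≤ ⟨x, hxPL⟩ := by
            show atuple u n (i + 1) (u (i + 1) + 1) ≤ x
            rw [hx]; refine pi_le fun t => ?_
            by_cases ht : 1 ≤ t ∧ t ≤ n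
            · rcases lt_or_ge t (i + 1) with h | h
              · rw [atuple_lt ht.1 ht.2 h]
                exact atuple_ge_u ht.1 ht.2
              · rw [atuple_ge ht.1 ht.2 h, atuple_ge ht.1 ht.2 (by omega)]
                have harg : u (i + 1) + 1 + ((t : ℤ) - ((i + 1 : ℕ) : ℤ))
                    = j + ((t : ℤ) - (i : ℤ)) := by push_cast; omega
                rw [harg]
            · rw [atuple_out ht, atuple_out ht]
          have h2 : x ≤ atuple u n (i + 1) (u (i + 1) + 1) := hmin h1
          have h3 := le_pi h2 i
          have e1 : atuple u n i j i = j := by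
            rw [atuple_self hi1 hin]; exact max_eq_left (by omega)
          have e2 : atuple u n (i + 1) (u (i + 1) + 1) i = u i :=
            atuple_lt hi1 hin (by omega)
          rw [hx, e1, e2] at h3
          omega
    · rintro ⟨i, hi1, hin, heps, hxval⟩
      have hx : x = atuple u n i (u i + 1) := hxval
      intro y hyx
      obtain ⟨i', j', hi'1, hi'n, hj'1, hj'2, hy⟩ := y.2
      have hyx' : y.1 ≤ x := hyx
      -- entries of x above i are just u t
      have hxt : ∀ t, i < t → t ≤ n → x t = u t := by
        intro t hit htn
        have hiln : 1 < u (i + 1) - u i := by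
          rcases heps with h | h
          · omega
          · exact h
        have hg := gap u n humono (i + 1) t (by omega) (by omega) htn
        rw [hx, atuple_ge (by omega) htn (by omega)]
        refine max_eq_right ?_
        push_cast at hg ⊢
        omega
      have hkey : i' = i ∧ j' = u i + 1 := by
        have h3 := le_pi hyx' i'
        have e1 : y.1 i' = j' := by
          rw [hy, atuple_self hi'1 hi'n]; exact max_eq_left (by omega)
        rw [e1] at h3
        rcases lt_trichotomy i' i with h | h | h
        · rw [hx, atuple_lt hi'1 hi'n h] at h3; omega
        · refine ⟨h, ?_⟩
          subst h
          have e2 : x i' = u i' + 1 := by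
            rw [hx, atuple_self hi'1 hi'n]; exact max_eq_left (by omega)
          rw [e2] at h3; omega
        · rw [hxt i' h hi'n] at h3; omega
      show x ≤ y.1
      rw [hx, hy, hkey.1, hkey.2]
  · -- === maximal elements ===
    rintro ⟨x, hxPL⟩
    constructor
    · intro hmax
      obtain ⟨i, j, hi1, hin, hj1, hj2, hx⟩ := id hxPL
      by_cases hj : j < v i
      · -- x < a_{i,j+1} : contradiction with maximality
        exfalso
        have hc1 : u i + 1 ≤ j + 1 := by omega
        have hc2 : j + 1 ≤ v i := by omega
        have hyPL : atuple u n i (j + 1) ∈ PL n u v := ⟨i, j + 1, hi1, hin, hc1, hc2, rfl⟩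
        have h1 : (⟨x, hxPL⟩ : ↥(PL n u v)) ≤ ⟨atuple u n i (j + 1), hyPL⟩ := by
          show x ≤ atuple u n i (j + 1)
          rw [hx]; refine pi_le fun t => ?_
          by_cases ht : 1 ≤ t ∧ t ≤ n
          · rcases lt_or_ge t i with h | h
            · rw [atuple_lt ht.1 ht.2 h, atuple_lt ht.1 ht.2 h]
            · rw [atuple_ge ht.1 ht.2 h, atuple_ge ht.1 ht.2 h]
              refine max_le_max ?_ le_rfl
              omega
          · rw [atuple_out ht, atuple_out ht]
        have h2 : atuple u n i (j + 1) ≤ x := hmax h1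
        have h3 := le_pi h2 i
        have e1 : atuple u n i j i = j := by
          rw [atuple_self hi1 hin]; exact max_eq_left (by omega)
        have e2 : atuple u n i (j + 1) i = j + 1 := by
          rw [atuple_self hi1 hin]; exact max_eq_left (by omega)
        rw [hx, e1, e2] at h3
        omega
      · have hjeq : j = v i := by omega
        by_cases hθ : thetaGt1 v i
        · exact ⟨i, hi1, hin, hθ, by show x = atuple u n i (v i); rw [hx, hjeq]⟩
        · -- θ_{i-1} ≤ 1 : x < a_{i-1, v_{i-1}} : contradiction
          exfalso
          rw [thetaGt1] at hθ; push_neg at hθ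
          obtain ⟨hine, hle⟩ := hθ
          obtain ⟨k, rfl⟩ : ∃ k, i = k + 1 := ⟨i - 1, by omega⟩
          have hk1 : 1 ≤ k := by omega
          have hkn : k ≤ n := by omega
          simp only [Nat.add_sub_cancel] at hle
          have hv' : v (k + 1) = v k + 1 := by
            have := hvmono k hk1 hin; omega
          have huvk := huv k hk1 hkn
          have hc1 : u k + 1 ≤ v k := by omega
          have hyPL : atuple u n k (v k) ∈ PL n u v := ⟨k, v k, hk1, hkn, hc1, le_rfl, rfl⟩
          have h1 : (⟨x, hxPL⟩ : ↥(PL n u v)) ≤ ⟨atuple u n k (v k), hyPL⟩ := by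
            show x ≤ atuple u n k (v k)
            rw [hx]; refine pi_le fun t => ?_
            by_cases ht : 1 ≤ t ∧ t ≤ n
            · rcases lt_or_ge t (k + 1) with h | h
              · rw [atuple_lt ht.1 ht.2 h]
                exact atuple_ge_u ht.1 ht.2
              · rw [atuple_ge ht.1 ht.2 (by omega), atuple_ge ht.1 ht.2 (by omega)]
                have harg : j + ((t : ℤ) - ((k + 1 : ℕ) : ℤ))
                    = v k + ((t : ℤ) - (k : ℤ)) := by push_cast; omega
                rw [harg]
            · rw [atuple_out ht, atuple_out ht]
          have h2 : atuple u n k (v k) ≤ x := hmax h1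
          have h3 := le_pi h2 k
          have e1 : atuple u n k (v k) k = v k := by
            rw [atuple_self hk1 hkn]; exact max_eq_left (by omega)
          have e2 : atuple u n (k + 1) j k = u k := atuple_lt hk1 hkn (by omega)
          rw [hx, e1, e2] at h3
          omega
    · rintro ⟨i, hi1, hin, hθ, hxval⟩
      have hx : x = atuple u n i (v i) := hxval
      intro y hxy
      obtain ⟨i', j', hi'1, hi'n, hj'1, hj'2, hy⟩ := y.2
      have hxy' : x ≤ y.1 := hxy
      have huvi := huv i hi1 hin
      have hybd : ∀ t, 1 ≤ t → t ≤ n → y.1 t ≤ v t := by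
        intro t h1 h2
        rw [hy]; exact atuple_le_v hvmono huv hi'1 hj'2 h1 h2
      have h3 : v i ≤ y.1 i := by
        have := le_pi hxy' i
        have e1 : x i = v i := by
          rw [hx, atuple_self hi1 hin]; exact max_eq_left (by omega)
        rwa [e1] at this
      have h4 : y.1 i ≤ v i := hybd i hi1 hin
      have hkey : i' = i ∧ j' = v i := by
        rcases lt_trichotomy i' i with h | h | h
        · -- i' < i : contradiction via entry i-1
          exfalso
          obtain ⟨k, rfl⟩ : ∃ k, i = k + 1 := ⟨i - 1, by omega⟩
          have hθ' : 1 < v (k + 1) - v k := by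
            rcases hθ with h' | h'
            · omega
            · simpa using h'
          have hyi : y.1 (k + 1) = max (j' + (((k + 1 : ℕ) : ℤ) - (i' : ℤ))) (u (k + 1)) := by
            rw [hy]; exact atuple_ge hi1 hin (by omega)
          have harg : v (k + 1) ≤ j' + (((k + 1 : ℕ) : ℤ) - (i' : ℤ)) := by
            rw [hyi] at h3
            rcases le_or_gt (j' + (((k + 1 : ℕ) : ℤ) - (i' : ℤ))) (u (k + 1)) with hc | hc
            · rw [max_eq_right hc] at h3; omega
            · rw [max_eq_left hc.le] at h3; exact h3
          have hk1 : 1 ≤ k := by omega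
          have hyk : y.1 k = max (j' + ((k : ℤ) - (i' : ℤ))) (u k) := by
            rw [hy]; exact atuple_ge hk1 (by omega) (by omega)
          have h5 : y.1 k ≤ v k := hybd k hk1 (by omega)
          rw [hyk] at h5
          have h6 := le_max_left (j' + ((k : ℤ) - (i' : ℤ))) (u k)
          have h7 : j' + ((k : ℤ) - (i' : ℤ)) ≤ v k := le_trans h6 h5
          push_cast at harg
          omega
        · refine ⟨h, ?_⟩
          subst h
          have e1 : y.1 i' = j' := by
            rw [hy, atuple_self hi'1 hi'n]; exact max_eq_left (by omega)
          rw [e1] at h3 h4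
          omega
        · exfalso
          rw [hy, atuple_lt hi1 hin h] at h3
          omega
      show y.1 ≤ x
      rw [hx, hy, hkey.1, hkey.2]

end LadderPaper
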